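/- For every n ≥ k ≥ 1 there exists a family F of functions from {1,…,n} to {1,…,k²} with |F| ≤ k^{O(1)}·log n such that for every subset S ⊆ {1,…,n} with |S| = k, some f ∈ F is injective on S. -/

import Mathlib

open scoped Classical

/-- Bound `m^j ≤ m^{\underline j} + (∑ i < j) · m^(j-1)` (Weierstrass-type inequality). -/
lemma pow_le_descFactorial_add (m : ℕ) :
    ∀ j, j ≤ m → m ^ j ≤ m.descFactorial j + (∑ i ∈ Finset.range j, i) * m ^ (j - 1) := by
  intro j
  induction j with
  | zero => simp
  | succ j ih =>
    intro hj
    have hjm : j ≤ m := Nat.le_of_succ_le hj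
    have IH := ih hjm
    have hsum : (∑ i ∈ Finset.range j, i) * (m * m ^ (j - 1))
        ≤ (∑ i ∈ Finset.range j, i) * m ^ j := by
      cases j with
      | zero => simp
      | succ j' =>
        apply Nat.mul_le_mul_left
        rw [Nat.succ_sub_one, ← pow_succ']
    have hmD : m * m.descFactorial j
        = m.descFactorial (j + 1) + j * m.descFactorial j := by
      rw [Nat.descFactorial_succ, ← Nat.add_mul, Nat.sub_add_cancel hjm]
    calc m ^ (j + 1) = m * m ^ j := by rw [pow_succ, Nat.mul_comm]
      _ ≤ m * (m.descFactorial j + (∑ i ∈ Finset.range j, i) * m ^ (j - 1)) :=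
          Nat.mul_le_mul_left m IH
      _ = m * m.descFactorial j + (∑ i ∈ Finset.range j, i) * (m * m ^ (j - 1)) := by ring
      _ ≤ m * m.descFactorial j + (∑ i ∈ Finset.range j, i) * m ^ j :=
          Nat.add_le_add_left hsum _
      _ = m.descFactorial (j + 1) + (j * m.descFactorial j
            + (∑ i ∈ Finset.range j, i) * m ^ j) := by rw [hmD]; ring
      _ ≤ m.descFactorial (j + 1) + (j * m ^ j + (∑ i ∈ Finset.range j, i) * m ^ j) := by
          have := Nat.mul_le_mul_left j (Nat.descFactorial_le_pow m j)
          omega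
      _ = m.descFactorial (j + 1) + (∑ i ∈ Finset.range (j + 1), i) * m ^ (j + 1 - 1) := by
          rw [Finset.sum_range_succ, Nat.succ_sub_one]
          ring

/-- `(k²)^k ≤ 2 · (k²)^{\underline k}`. -/
lemma pow_le_two_mul_descFactorial (k : ℕ) (hk : 1 ≤ k) :
    (k ^ 2) ^ k ≤ 2 * (k ^ 2).descFactorial k := by
  have hkm : k ≤ k ^ 2 := by nlinarith
  have h := pow_le_descFactorial_add (k ^ 2) k hkm
  have hgauss : (∑ i ∈ Finset.range k, i) * 2 = k * (k - 1) := Finset.sum_range_id_mul_two k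
  have hkk : k * (k - 1) ≤ k ^ 2 := by
    have : k - 1 ≤ k := Nat.sub_le k 1
    nlinarith
  have hpow : (k ^ 2) * (k ^ 2) ^ (k - 1) = (k ^ 2) ^ k := by
    rw [← pow_succ']
    congr 1
    omega
  have h2 : (∑ i ∈ Finset.range k, i) * (k ^ 2) ^ (k - 1) * 2 ≤ (k ^ 2) ^ k := by
    calc (∑ i ∈ Finset.range k, i) * (k ^ 2) ^ (k - 1) * 2
        = ((∑ i ∈ Finset.range k, i) * 2) * (k ^ 2) ^ (k - 1) := by ring
      _ = (k * (k - 1)) * (k ^ 2) ^ (k - 1) := by rw [hgauss]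
      _ ≤ (k ^ 2) * (k ^ 2) ^ (k - 1) := Nat.mul_le_mul_right _ hkk
      _ = (k ^ 2) ^ k := hpow
  omega

/-- The number of functions injective on a fixed `k`-set is at least
`m^{\underline k} · m^(n-k)`. -/
lemma count_injOn_ge (n m k : ℕ) (S : Finset (Fin n)) (hS : S.card = k) :
    m.descFactorial k * m ^ (n - k) ≤
      (Finset.univ.filter (fun f : Fin n → Fin m => Set.InjOn f ↑S)).card := by
  have key : Fintype.card (({x // x ∈ S} ↪ Fin m) × ({x : Fin n // x ∉ S} → Fin m)) ≤
      (Finset.univ.filter (fun f : Fin n → Fin m => Set.InjOn f ↑S)).card := by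
    rw [← Finset.card_univ]
    apply Finset.card_le_card_of_injOn
      (f := fun p x => if h : x ∈ S then p.1 ⟨x, h⟩ else p.2 ⟨x, h⟩)
    · intro p _
      rw [Finset.mem_coe, Finset.mem_filter]
      refine ⟨Finset.mem_univ _, ?_⟩
      intro x hx y hy hxy
      simp only [Finset.mem_coe] at hx hy
      simp only [dif_pos hx, dif_pos hy] at hxy
      exact Subtype.ext_iff.mp (p.1.injective hxy)
    · intro p _ q _ h
      have h' := fun x => congrFun h x
      refine Prod.ext ?_ ?_
      · apply DFunLike.ext
        rintro ⟨x, hx⟩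
        have := h' x
        simp only [dif_pos hx] at this
        exact this
      · funext ⟨x, hx⟩
        have := h' x
        simp only [dif_neg hx] at this
        exact this
  have hc1 : Fintype.card {x // x ∈ S} = k := by
    rw [Fintype.card_coe, hS]
  have hc2 : Fintype.card {x : Fin n // x ∉ S} = n - k := by
    rw [Fintype.card_subtype_compl, Fintype.card_fin, hc1]
  calc m.descFactorial k * m ^ (n - k)
      = Fintype.card (({x // x ∈ S} ↪ Fin m) × ({x : Fin n // x ∉ S} → Fin m)) := by
        rw [Fintype.card_prod, Fintype.card_embedding_eq, Fintype.card_fun,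
          Fintype.card_fin, hc1, hc2]
    _ ≤ _ := key

/-- There is a function injective on at least half of the members of any family of
`k`-sets. -/
lemma exists_good (n k : ℕ) (hk : 1 ≤ k) (hkn : k ≤ n)
    (𝒮 : Finset (Finset (Fin n))) (h𝒮 : ∀ S ∈ 𝒮, S.card = k) :
    ∃ f : Fin n → Fin (k ^ 2),
      𝒮.card ≤ 2 * (𝒮.filter (fun S : Finset (Fin n) => Set.InjOn f ↑S)).card := by
  set m := k ^ 2 with hm
  have hm1 : 0 < m := by positivity
  haveI : Nonempty (Fin m) := ⟨⟨0, hm1⟩⟩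
  by_contra hcon
  push_neg at hcon
  have hswap : ∑ f : Fin n → Fin m,
        (𝒮.filter (fun S : Finset (Fin n) => Set.InjOn f ↑S)).card
      = ∑ S ∈ 𝒮, (Finset.univ.filter (fun f : Fin n → Fin m => Set.InjOn f ↑S)).card := by
    simp only [Finset.card_filter]
    rw [Finset.sum_comm]
  have hlow : 𝒮.card * (m.descFactorial k * m ^ (n - k))
      ≤ ∑ f : Fin n → Fin m,
          (𝒮.filter (fun S : Finset (Fin n) => Set.InjOn f ↑S)).card := by
    rw [hswap]
    calc 𝒮.card * (m.descFactorial k * m ^ (n - k))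
        = ∑ _S ∈ 𝒮, m.descFactorial k * m ^ (n - k) := by
          rw [Finset.sum_const, smul_eq_mul]
      _ ≤ _ := Finset.sum_le_sum (fun S hS => count_injOn_ge n m k S (h𝒮 S hS))
  have hup : 2 * ∑ f : Fin n → Fin m,
        (𝒮.filter (fun S : Finset (Fin n) => Set.InjOn f ↑S)).card
      < m ^ n * 𝒮.card := by
    have hne : (Finset.univ : Finset (Fin n → Fin m)).Nonempty := Finset.univ_nonempty
    calc 2 * ∑ f : Fin n → Fin m,
          (𝒮.filter (fun S : Finset (Fin n) => Set.InjOn f ↑S)).card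
        = ∑ f : Fin n → Fin m,
            2 * (𝒮.filter (fun S : Finset (Fin n) => Set.InjOn f ↑S)).card := by
          rw [Finset.mul_sum]
      _ < ∑ _f : Fin n → Fin m, 𝒮.card := Finset.sum_lt_sum_of_nonempty hne
          (fun f _ => hcon f)
      _ = m ^ n * 𝒮.card := by
          rw [Finset.sum_const, smul_eq_mul, Finset.card_univ, Fintype.card_fun]
          simp
  have hkey : m ^ n * 𝒮.card ≤ 2 * (𝒮.card * (m.descFactorial k * m ^ (n - k))) := by
    have hdesc : m ^ k ≤ 2 * m.descFactorial k := pow_le_two_mul_descFactorial k hk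
    calc m ^ n * 𝒮.card = 𝒮.card * (m ^ k * m ^ (n - k)) := by
          rw [← pow_add, Nat.add_sub_cancel' hkn]
          ring
      _ ≤ 𝒮.card * (2 * m.descFactorial k * m ^ (n - k)) := by
          apply Nat.mul_le_mul_left
          exact Nat.mul_le_mul_right _ hdesc
      _ = 2 * (𝒮.card * (m.descFactorial k * m ^ (n - k))) := by ring
  have := Nat.mul_le_mul_left 2 hlow
  omega

/-- Greedy covering: after `t` halving steps at most `𝒮.card / 2^t` sets remain uncovered. -/
lemma greedy (n k : ℕ) (hk : 1 ≤ k) (hkn : k ≤ n) :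
    ∀ t : ℕ, ∀ 𝒮 : Finset (Finset (Fin n)), (∀ S ∈ 𝒮, S.card = k) →
      ∃ F : Finset (Fin n → Fin (k ^ 2)), F.card ≤ t ∧
        (𝒮.filter (fun S : Finset (Fin n) => ∀ f ∈ F, ¬ Set.InjOn f ↑S)).card * 2 ^ t
          ≤ 𝒮.card := by
  intro t
  induction t with
  | zero =>
    intro 𝒮 h𝒮
    refine ⟨∅, le_refl _, ?_⟩
    rw [Finset.filter_true_of_mem (fun S _ => by simp)]
    simp
  | succ t ih =>
    intro 𝒮 h𝒮
    obtain ⟨f, hf⟩ := exists_good n k hk hkn 𝒮 h𝒮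
    set 𝒮' := 𝒮.filter (fun S : Finset (Fin n) => ¬ Set.InjOn f ↑S) with h𝒮'def
    have h𝒮' : ∀ S ∈ 𝒮', S.card = k := fun S hS => h𝒮 S (Finset.mem_filter.mp hS).1
    obtain ⟨F', hF'card, hF'⟩ := ih 𝒮' h𝒮'
    refine ⟨insert f F', ?_, ?_⟩
    · calc (insert f F').card ≤ F'.card + 1 := Finset.card_insert_le f F'
        _ ≤ t + 1 := by omega
    · have hfilter : 𝒮.filter (fun S : Finset (Fin n) => ∀ g ∈ insert f F', ¬ Set.InjOn g ↑S)
          = 𝒮'.filter (fun S : Finset (Fin n) => ∀ g ∈ F', ¬ Set.InjOn g ↑S) := by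
        rw [h𝒮'def, Finset.filter_filter]
        apply Finset.filter_congr
        intro S _
        simp only [Finset.mem_insert, eq_iff_iff]
        constructor
        · intro h
          exact ⟨h f (Or.inl rfl), fun g hg => h g (Or.inr hg)⟩
        · rintro ⟨h1, h2⟩ g hg
          rcases hg with rfl | hg
          · exact h1
          · exact h2 g hg
      have hsplit : (𝒮.filter (fun S : Finset (Fin n) => Set.InjOn f ↑S)).card
          + 𝒮'.card = 𝒮.card := by
        rw [h𝒮'def]
        exact Finset.card_filter_add_card_filter_not
          (fun S : Finset (Fin n) => Set.InjOn f ↑S)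
      have hhalf : 2 * 𝒮'.card ≤ 𝒮.card := by omega
      rw [hfilter]
      calc (𝒮'.filter (fun S : Finset (Fin n) => ∀ g ∈ F', ¬ Set.InjOn g ↑S)).card * 2 ^ (t + 1)
          = ((𝒮'.filter (fun S : Finset (Fin n) => ∀ g ∈ F', ¬ Set.InjOn g ↑S)).card * 2 ^ t)
              * 2 := by ring
        _ ≤ 𝒮'.card * 2 := Nat.mul_le_mul_right 2 hF'
        _ ≤ 𝒮.card := by omega

/-- Splitter existence (Alon–Yuster–Zwick): for all `n ≥ k ≥ 1` there is a family `F` of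
functions from `Fin n` to `Fin (k^2)` of size at most `k^{O(1)} · log n` such that every
`k`-element subset `S` of `Fin n` is hashed injectively by some member of `F`. -/
theorem splitter_exists :
    ∃ C : ℕ, 0 < C ∧ ∀ n k : ℕ, 1 ≤ k → k ≤ n →
      ∃ F : Finset (Fin n → Fin (k ^ 2)),
        F.card ≤ C * k ^ C * (Nat.log 2 n + 1) ∧
        ∀ S : Finset (Fin n), S.card = k → ∃ f ∈ F, Set.InjOn f ↑S := by
  refine ⟨4, by norm_num, ?_⟩
  intro n k hk hkn
  set L := Nat.log 2 n with hL
  set t := k * (L + 1) with ht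
  set 𝒮 : Finset (Finset (Fin n)) := Finset.powersetCard k Finset.univ with h𝒮def
  have h𝒮 : ∀ S ∈ 𝒮, S.card = k := by
    intro S hS
    exact (Finset.mem_powersetCard.mp hS).2
  obtain ⟨F, hFcard, hF⟩ := greedy n k hk hkn t 𝒮 h𝒮
  have h𝒮card : 𝒮.card = n.choose k := by
    rw [h𝒮def, Finset.card_powersetCard, Finset.card_univ, Fintype.card_fin]
  have hchoose : n.choose k ≤ n ^ k := Nat.choose_le_pow n k
  have hnk : n ^ k < 2 ^ t := by
    have h1 : n < 2 ^ (L + 1) := Nat.lt_pow_succ_log_self (by norm_num) n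
    calc n ^ k < (2 ^ (L + 1)) ^ k := Nat.pow_lt_pow_left h1 (by omega)
      _ = 2 ^ t := by rw [← pow_mul, ht]; ring_nf
  have hrem : (𝒮.filter (fun S : Finset (Fin n) => ∀ f ∈ F, ¬ Set.InjOn f ↑S)).card = 0 := by
    by_contra h
    have h1 : 1 ≤ (𝒮.filter (fun S : Finset (Fin n) => ∀ f ∈ F, ¬ Set.InjOn f ↑S)).card := by
      omega
    have h2 : 2 ^ t ≤
        (𝒮.filter (fun S : Finset (Fin n) => ∀ f ∈ F, ¬ Set.InjOn f ↑S)).card * 2 ^ t :=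
      Nat.le_mul_of_pos_left _ (by omega)
    omega
  refine ⟨F, ?_, ?_⟩
  · calc F.card ≤ t := hFcard
      _ = k * (L + 1) := ht
      _ ≤ 4 * k ^ 4 * (L + 1) := by
        apply Nat.mul_le_mul_right
        have : k ≤ k ^ 4 := Nat.le_self_pow (by norm_num) k
        omega
  · intro S hScard
    have hSmem : S ∈ 𝒮 := by
      rw [h𝒮def, Finset.mem_powersetCard]
      exact ⟨Finset.subset_univ S, hScard⟩
    have hfilter : S ∉ 𝒮.filter (fun S : Finset (Fin n) => ∀ f ∈ F, ¬ Set.InjOn f ↑S) := by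
      rw [Finset.card_eq_zero] at hrem
      rw [hrem]
      exact Finset.notMem_empty S
    rw [Finset.mem_filter] at hfilter
    push_neg at hfilter
    exact hfilter hSmem
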